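/- arXiv:2003.02882 — 6 statements merged into one kernel-verified Lean document; each statement's English description precedes it below -/
import Mathlib

section
/- Let X be a set of size n and let x₁, …, x_m be elements of X, not necessarily distinct. There exists a bijection σ : X → {1, …, n} such that for each i = 1, …, m: (a) σ(x_i) ≤ i, and (b) for every d with 2 ≤ d ≤ i, if σ(x_i) = d then there exists j ∈ {1, …, i−1} with σ(x_j) = d − 1. -/
lemma ordered_constants_aux {X : Type*} [Fintype X] [DecidableEq X] {n : ℕ}
    (hn : Fintype.card X = n) :
    ∀ {m : ℕ} (x : Fin m → X),
    ∃ σ : X ≃ Fin n,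
      (∀ i : Fin m, (σ (x i)).val < ((Finset.Iic i).image x).card) ∧
      (∀ i : Fin m, ∀ d : ℕ, 2 ≤ d → d ≤ i.val + 1 → (σ (x i)).val + 1 = d →
        ∃ j : Fin m, j.val < i.val ∧ (σ (x j)).val + 1 = d - 1) := by
  intro m
  induction m with
  | zero =>
    intro x
    exact ⟨Fintype.equivFinOfCardEq hn, fun i => i.elim0, fun i => i.elim0⟩
  | succ m ih =>
    intro x
    obtain ⟨σ, h1, h2⟩ := ih (x ∘ Fin.castSucc)
    set x' : Fin m → X := x ∘ Fin.castSucc with hx'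
    set a : X := x (Fin.last m) with hadef
    set S : Finset X := Finset.image x' Finset.univ with hS
    -- images compare
    have himg : ∀ j : Fin m,
        ((Finset.Iic j).image x').card ≤ ((Finset.Iic j.castSucc).image x).card := by
      intro j
      apply Finset.card_le_card
      intro y hy
      obtain ⟨k, hk, rfl⟩ := Finset.mem_image.mp hy
      exact Finset.mem_image.mpr ⟨k.castSucc, by
        simpa [Fin.castSucc_le_castSucc_iff] using (Finset.mem_Iic.mp hk), rfl⟩
    have hbound : ∀ j : Fin m, (σ (x' j)).val < j.val + 1 := by
      intro j
      calc (σ (x' j)).val < ((Finset.Iic j).image x').card := h1 j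
        _ ≤ (Finset.Iic j).card := Finset.card_image_le
        _ = j.val + 1 := by simp [Fin.card_Iic]
    have hboundS : ∀ j : Fin m, (σ (x' j)).val < S.card := by
      intro j
      calc (σ (x' j)).val < ((Finset.Iic j).image x').card := h1 j
        _ ≤ S.card := Finset.card_le_card (Finset.image_subset_image (by simp))
    by_cases ha : a ∈ S
    · -- a already appeared
      refine ⟨σ, ?_, ?_⟩
      · intro i
        induction i using Fin.lastCases with
        | last =>
          obtain ⟨j, _, hj⟩ := Finset.mem_image.mp ha
          have : x (Fin.last m) = x' j := hj.symm
          rw [this]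
          calc (σ (x' j)).val < ((Finset.Iic j).image x').card := h1 j
            _ ≤ ((Finset.Iic j.castSucc).image x).card := himg j
            _ ≤ ((Finset.Iic (Fin.last m)).image x).card :=
              Finset.card_le_card (Finset.image_subset_image (Finset.Iic_subset_Iic.mpr
                (Fin.le_last _)))
        | cast j =>
          calc (σ (x (j.castSucc))).val < ((Finset.Iic j).image x').card := h1 j
            _ ≤ ((Finset.Iic j.castSucc).image x).card := himg j
      · intro i d hd2 hdi hσ
        induction i using Fin.lastCases with
        | last =>
          obtain ⟨j, _, hj⟩ := Finset.mem_image.mp ha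
          have hxa : x (Fin.last m) = x' j := hj.symm
          rw [hxa] at hσ
          have hdj : d ≤ j.val + 1 := by have := hbound j; omega
          obtain ⟨j2, hj2lt, hj2⟩ := h2 j d hd2 hdj hσ
          refine ⟨j2.castSucc, ?_, hj2⟩
          have : j2.val < m := lt_trans hj2lt j.isLt
          simpa using this
        | cast j =>
          obtain ⟨j2, hj2lt, hj2⟩ := h2 j d hd2 (by simpa using hdi) hσ
          exact ⟨j2.castSucc, by simpa using hj2lt, hj2⟩
    · -- a is new
      have hsn : S.card < n := by
        have : insert a S ⊆ Finset.univ := Finset.subset_univ _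
        have hc := Finset.card_le_card this
        rw [Finset.card_insert_of_notMem ha] at hc
        simp [hn] at hc
        omega
      set σ' : X ≃ Fin n := σ.trans (Equiv.swap (σ a) ⟨S.card, hsn⟩) with hσ'
      have hfix : ∀ j : Fin m, σ' (x j.castSucc) = σ (x' j) := by
        intro j
        have hne1 : σ (x' j) ≠ σ a := by
          intro h
          exact ha (σ.injective h ▸ Finset.mem_image.mpr ⟨j, Finset.mem_univ _, rfl⟩)
        have hne2 : σ (x' j) ≠ ⟨S.card, hsn⟩ := by
          intro h
          have := hboundS j
          rw [h] at this
          simp at this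
        have hxx : x j.castSucc = x' j := rfl
        rw [hσ', Equiv.trans_apply, hxx]
        exact Equiv.swap_apply_of_ne_of_ne hne1 hne2
      have hσ'a : σ' a = ⟨S.card, hsn⟩ := by simp [hσ']
      have hcard_last : S.card + 1 ≤ ((Finset.Iic (Fin.last m)).image x).card := by
        have hsub : insert a S ⊆ (Finset.Iic (Fin.last m)).image x := by
          intro y hy
          rcases Finset.mem_insert.mp hy with rfl | hy
          · exact Finset.mem_image.mpr ⟨Fin.last m, by simp, rfl⟩
          · obtain ⟨j, _, rfl⟩ := Finset.mem_image.mp hy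
            exact Finset.mem_image.mpr ⟨j.castSucc, by simp [Fin.le_last], rfl⟩
        calc S.card + 1 = (insert a S).card := (Finset.card_insert_of_notMem ha).symm
          _ ≤ _ := Finset.card_le_card hsub
      refine ⟨σ', ?_, ?_⟩
      · intro i
        induction i using Fin.lastCases with
        | last =>
          rw [← hadef, hσ'a]
          exact hcard_last
        | cast j =>
          have : σ' (x j.castSucc) = σ (x' j) := hfix j
          rw [this]
          calc (σ (x' j)).val < ((Finset.Iic j).image x').card := h1 j
            _ ≤ ((Finset.Iic j.castSucc).image x).card := himg j
      · intro i d hd2 hdi hσv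
        induction i using Fin.lastCases with
        | last =>
          rw [← hadef, hσ'a] at hσv
          simp at hσv
          -- d = S.card + 1, need j with σ (x' j) = S.card - 1 = d - 2
          have hs1 : 1 ≤ S.card := by omega
          -- counting: image of σ∘val over S is range S.card
          have hTcard : (S.image (fun y => (σ y).val)).card = S.card := by
            apply Finset.card_image_of_injOn
            intro u _ v _ huv
            exact σ.injective (Fin.val_injective huv)
          have hTsub : S.image (fun y => (σ y).val) ⊆ Finset.range S.card := by
            intro k hk
            obtain ⟨y, hy, rfl⟩ := Finset.mem_image.mp hk
            obtain ⟨j, _, rfl⟩ := Finset.mem_image.mp hy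
            exact Finset.mem_range.mpr (hboundS j)
          have hTeq : S.image (fun y => (σ y).val) = Finset.range S.card :=
            Finset.eq_of_subset_of_card_le hTsub (by simp [hTcard])
          have hmem : S.card - 1 ∈ S.image (fun y => (σ y).val) := by
            rw [hTeq]; exact Finset.mem_range.mpr (by omega)
          obtain ⟨y, hy, hyv⟩ := Finset.mem_image.mp hmem
          obtain ⟨j, _, rfl⟩ := Finset.mem_image.mp hy
          refine ⟨j.castSucc, by simpa using j.isLt, ?_⟩
          rw [hfix j, hyv]
          omega
        | cast j =>
          rw [hfix j] at hσv
          obtain ⟨j2, hj2lt, hj2⟩ := h2 j d hd2 (by simpa using hdi) hσv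
          refine ⟨j2.castSucc, by simpa using hj2lt, ?_⟩
          rw [hfix j2]; exact hj2

/-- Soundness core for ordered constant and canonicity constraints: given not
necessarily distinct `x₁, …, x_m` in a set `X` of size `n`, there is a
bijection `σ : X ≃ {1, …, n}` (here `Fin n`, 1-indexed as `val + 1`) such that
`σ(x_i) ≤ i` and whenever `σ(x_i) = d` with `2 ≤ d ≤ i`, some earlier `x_j`
(`j < i`) has `σ(x_j) = d - 1`. -/
theorem ordered_constants_bijection {X : Type*} [Fintype X] {n m : ℕ}
    (hn : Fintype.card X = n) (x : Fin m → X) :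
    ∃ σ : X ≃ Fin n,
      ∀ i : Fin m,
        ((σ (x i)).val + 1 ≤ i.val + 1) ∧
        (∀ d : ℕ, 2 ≤ d → d ≤ i.val + 1 → (σ (x i)).val + 1 = d →
          ∃ j : Fin m, j.val < i.val ∧ (σ (x j)).val + 1 = d - 1) := by
  classical
  obtain ⟨σ, h1, h2⟩ := ordered_constants_aux hn x
  refine ⟨σ, fun i => ⟨?_, h2 i⟩⟩
  have := h1 i
  have hle : ((Finset.Iic i).image x).card ≤ i.val + 1 := by
    calc ((Finset.Iic i).image x).card ≤ (Finset.Iic i).card := Finset.card_image_le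
      _ = i.val + 1 := by simp [Fin.card_Iic]
  omega
end

section
/- Let X be a set of size n and let h be any function from X to X. There exists a bijection σ : X → {1, …, n} such that for every v ∈ X, if σ(v) = j then σ(h(v)) ≤ j + 1. -/
section Aux
variable {X : Type*} [DecidableEq X]

lemma indexOf_lt_of_mem_take : ∀ (l : List X) (k : ℕ) (x : X), x ∈ l.take k → l.idxOf x < k := by
  intro l
  induction l with
  | nil => intro k x hx; simp at hx
  | cons a t ih =>
    intro k x hx
    cases k with
    | zero => simp at hx
    | succ k =>
      simp only [List.take_succ_cons, List.mem_cons] at hx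
      by_cases hxa : x = a
      · subst hxa; simp only [List.idxOf_cons_self]; omega
      · rcases hx with rfl | hx
        · exact absurd rfl hxa
        · have := ih k x hx
          rw [List.idxOf_cons_ne _ (fun h => hxa h.symm)]
          omega

def ChainProp (h : X → X) (L : List X) : Prop :=
  ∀ i (hi : i < L.length), h (L.get ⟨i, hi⟩) ∈ L → h (L.get ⟨i, hi⟩) ∈ L.take (i + 2)

lemma exists_chain_list (h : X → X) (s : Finset X) :
    ∀ c ∈ s, ∃ L : List X, L.Nodup ∧ (∀ x, x ∈ L ↔ x ∈ s) ∧
      (∃ hne : L ≠ [], L.head hne = c) ∧ ChainProp h L := by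
  induction s using Finset.strongInduction with
  | _ s ih =>
  intro c hc
  -- helper facts
  have key : ∀ (L' : List X), L'.Nodup → (∀ x, x ∈ L' ↔ x ∈ s.erase c) →
      ChainProp h L' →
      (h c ∈ s → h c = c ∨ (∃ hne : L' ≠ [], L'.head hne = h c)) →
      ∃ L : List X, L.Nodup ∧ (∀ x, x ∈ L ↔ x ∈ s) ∧
        (∃ hne : L ≠ [], L.head hne = c) ∧ ChainProp h L := by
    intro L' nd' mem' P' hcase
    refine ⟨c :: L', ?_, ?_, ⟨List.cons_ne_nil _ _, rfl⟩, ?_⟩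
    · refine List.nodup_cons.2 ⟨fun hmem => ?_, nd'⟩
      exact (Finset.notMem_erase c s) ((mem' c).1 hmem)
    · intro x
      simp only [List.mem_cons, mem']
      constructor
      · rintro (rfl | hx)
        · exact hc
        · exact Finset.mem_of_mem_erase hx
      · intro hx
        by_cases hxc : x = c
        · exact Or.inl hxc
        · exact Or.inr (Finset.mem_erase.2 ⟨hxc, hx⟩)
    · intro i hi hmem
      cases i with
      | zero =>
        simp only [List.get] at hmem ⊢
        have hcs : h c ∈ s := by
          rcases List.mem_cons.1 hmem with rfl' | hx
          · rw [rfl']; exact hc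
          · exact Finset.mem_of_mem_erase ((mem' _).1 hx)
        rcases hcase hcs with heq | ⟨hne, hhead⟩
        · rw [heq]; simp [List.take_succ_cons]
        · cases L' with
          | nil => exact absurd rfl hne
          | cons d t =>
            simp only [List.head] at hhead
            subst hhead
            simp [List.take]
      | succ i =>
        have hi' : i < L'.length := by simpa using hi
        have hget : (c :: L').get ⟨i + 1, hi⟩ = L'.get ⟨i, hi'⟩ := rfl
        rw [hget] at hmem ⊢
        rcases List.mem_cons.1 hmem with heq | hx
        · rw [heq]; simp [List.take_succ_cons]
        · have := P' i hi' hx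
          rw [show i + 1 + 2 = (i + 2) + 1 from rfl, List.take_succ_cons]
          exact List.mem_cons_of_mem _ this
  by_cases hmem : h c ∈ s.erase c
  · obtain ⟨L', nd', mem', ⟨hne, hhead⟩, P'⟩ :=
      ih (s.erase c) (Finset.erase_ssubset hc) (h c) hmem
    exact key L' nd' mem' P' (fun _ => Or.inr ⟨hne, hhead⟩)
  · rcases (s.erase c).eq_empty_or_nonempty with hemp | ⟨d, hd⟩
    · refine ⟨[c], List.nodup_singleton c, ?_, ⟨List.cons_ne_nil _ _, rfl⟩, ?_⟩
      · intro x
        simp only [List.mem_singleton]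
        constructor
        · rintro rfl; exact hc
        · intro hx
          by_contra hne
          exact absurd (Finset.mem_erase.2 ⟨hne, hx⟩) (by simp [hemp])
      · intro i hi hm
        simp only [List.length_singleton] at hi
        interval_cases i
        simpa using hm
    · obtain ⟨L', nd', mem', ⟨hne, hhead⟩, P'⟩ :=
        ih (s.erase c) (Finset.erase_ssubset hc) d hd
      refine key L' nd' mem' P' (fun hcs => Or.inl ?_)
      by_contra hnc
      exact hmem (Finset.mem_erase.2 ⟨hnc, hcs⟩)

end Aux

/-- Soundness core for ordered range constraints on a single-sorted unary
function: for any `h : X → X` on a set `X` of size `n`, there is a bijection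
`σ : X ≃ {1, …, n}` (here `Fin n`, 1-indexed as `val + 1`) such that for every
`v`, if `σ(v) = j` then `σ(h(v)) ≤ j + 1`. -/
theorem ordered_range_bijection {X : Type*} [Fintype X] {n : ℕ}
    (hn : Fintype.card X = n) (h : X → X) :
    ∃ σ : X ≃ Fin n,
      ∀ v : X, ∀ j : ℕ, (σ v).val + 1 = j → (σ (h v)).val + 1 ≤ j + 1 := by
  classical
  subst hn
  rcases isEmpty_or_nonempty X with hX | hne
  · exact ⟨Fintype.equivFin X, fun v => isEmptyElim v⟩
  · obtain ⟨c⟩ := hne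
    obtain ⟨L, nd, memL, _, P⟩ := exists_chain_list h Finset.univ c (Finset.mem_univ c)
    have memL' : ∀ x, x ∈ L := fun x => (memL x).2 (Finset.mem_univ x)
    let e : Fin L.length ≃ X := nd.getEquivOfForallMemList L memL'
    have hlen : L.length = Fintype.card X := by
      rw [← Fintype.card_fin L.length, Fintype.card_congr e]
    refine ⟨e.symm.trans (finCongr hlen), ?_⟩
    intro v j hj
    simp only [Equiv.trans_apply, finCongr_apply, Fin.coe_cast] at hj ⊢
    have hval : ∀ x : X, (e.symm x : ℕ) = L.idxOf x := fun x => by simp [e, List.Nodup.getEquivOfForallMemList]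
    rw [hval] at hj ⊢
    set i := L.idxOf v with hi
    have hilt : i < L.length := List.idxOf_lt_length_iff.2 (memL' v)
    have hgi : L.get ⟨i, hilt⟩ = v := List.idxOf_get hilt
    have := P i hilt (by rw [hgi]; exact memL' (h v))
    rw [hgi] at this
    have := indexOf_lt_of_mem_take L (i + 2) (h v) this
    omega
end

section
/- Let B be a finite set of size n enumerated as b₁, …, b_n, and let y₁, …, y_m be elements of B, not necessarily distinct. There exists a permutation σ of B such that for each i = 1, …, min{m, n}, σ(y_i) ∈ {b₁, …, b_i}. -/
/-- Soundness core for strong ordered range constraints for DRD functions: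
given an enumeration `b : Fin n ≃ B` of a finite set `B` and an arbitrary
sequence `y : Fin m → B`, there is a permutation `σ` of `B` such that for
each `i < min m n` (0-indexed), `σ(y_i) ∈ {b₀, …, b_i}`. -/
theorem drd_strong_ordered_range {B : Type*} [Fintype B] {n m : ℕ}
    (b : Fin n ≃ B) (y : Fin m → B) :
    ∃ σ : Equiv.Perm B,
      ∀ i : Fin m, (i : ℕ) < n →
        ∃ j : Fin n, (j : ℕ) ≤ (i : ℕ) ∧ σ (y i) = b j := by
  classical
  induction m with
  | zero => exact ⟨1, fun i => i.elim0⟩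
  | succ m ih =>
    obtain ⟨σ, hσ⟩ := ih (fun i => y i.castSucc)
    by_cases hm : m < n
    · set j : Fin n := b.symm (σ (y (Fin.last m))) with hj
      have hbj : b j = σ (y (Fin.last m)) := b.apply_symm_apply _
      by_cases hjm : (j : ℕ) ≤ m
      · refine ⟨σ, fun i hi => ?_⟩
        rcases lt_or_eq_of_le (Nat.lt_succ_iff.mp i.isLt) with h | h
        · obtain ⟨k, hk1, hk2⟩ := hσ ⟨i, h⟩ hi
          exact ⟨k, hk1, by simpa [Fin.castSucc] using hk2⟩
        · refine ⟨j, by omega, ?_⟩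
          have : i = Fin.last m := Fin.ext h
          rw [this, hbj]
      · refine ⟨Equiv.swap (b ⟨m, hm⟩) (b j) * σ, fun i hi => ?_⟩
        rcases lt_or_eq_of_le (Nat.lt_succ_iff.mp i.isLt) with h | h
        · obtain ⟨k, hk1, hk2⟩ := hσ ⟨i, h⟩ hi
          have hy : y i = y (Fin.castSucc ⟨i, h⟩) := by
            congr 1
          refine ⟨k, hk1, ?_⟩
          have hk : (k : ℕ) < m := lt_of_le_of_lt hk1 h
          have hne1 : b k ≠ b ⟨m, hm⟩ := by
            intro hc
            have := b.injective hc
            simp [Fin.ext_iff] at this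
            omega
          have hne2 : b k ≠ b j := by
            intro hc
            have := b.injective hc
            simp [Fin.ext_iff] at this
            omega
          simp only [Equiv.Perm.mul_apply, hy, hk2]
          exact Equiv.swap_apply_of_ne_of_ne hne1 hne2
        · refine ⟨⟨m, hm⟩, by simp [h], ?_⟩
          have hi' : i = Fin.last m := Fin.ext h
          simp only [Equiv.Perm.mul_apply, hi', ← hbj]
          exact Equiv.swap_apply_right _ _
    · refine ⟨σ, fun i hi => ?_⟩
      have h : (i : ℕ) < m := lt_of_lt_of_le hi (le_of_not_gt hm)
      obtain ⟨k, hk1, hk2⟩ := hσ ⟨i, h⟩ hi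
      exact ⟨k, hk1, by simpa [Fin.castSucc] using hk2⟩
end

section
/- Let A be a finite set, X a subset of A enumerated as a₁, …, a_m, and let y₁, …, y_n be elements of A, not necessarily distinct. There exists a permutation σ of A that fixes every element of A \ X such that for each k = 1, …, min{m, n}: (a) σ(y_k) ∈ {a₁, …, a_k} ∪ (A \ X), and (b) for every d with 2 ≤ d ≤ k, if σ(y_k) = a_d then there exists i ∈ {1, …, k−1} with σ(y_i) = a_{d−1}. -/
private lemma fin_le_strictMono {k n : ℕ} {f : Fin k → Fin n} (hf : StrictMono f)
    (i : Fin k) : (i : ℕ) ≤ (f i : ℕ) := by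
  obtain ⟨i, hi⟩ := i
  induction i with
  | zero => exact Nat.zero_le _
  | succ j ih =>
    have hj : j < k := Nat.lt_of_succ_lt hi
    have h1 : (⟨j, hj⟩ : Fin k) < ⟨j + 1, hi⟩ := by
      rw [Fin.lt_def]; exact Nat.lt_succ_self j
    have h2 := hf h1
    rw [Fin.lt_def] at h2
    have h3 := ih hj
    have e1 : ((⟨j, hj⟩ : Fin k) : ℕ) = j := rfl
    have e2 : ((⟨j + 1, hi⟩ : Fin k) : ℕ) = j + 1 := rfl
    omega

set_option maxHeartbeats 1000000 in
/-- Extended soundness core for constant symmetry breaking: with `X ⊆ A`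
enumerated by `a : Fin m ≃ X` and an arbitrary sequence `y : Fin n → A`, there
is a permutation `σ` of `A` fixing `A \ X` pointwise such that for each
`k < min n m` (0-indexed): (a) `σ(y_k) ∈ {a₀, …, a_k} ∪ (A \ X)`, and (b) if
`σ(y_k) = a_d` with `1 ≤ d ≤ k` (0-indexed, i.e. `2 ≤ d ≤ k` 1-indexed) then
some earlier `y_i` (`i < k`) has `σ(y_i) = a_{d-1}`. -/
theorem constant_symmetry_breaking_extended {A : Type*} [Fintype A]
    {m n : ℕ} (X : Set A) (a : Fin m ≃ X) (y : Fin n → A) :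
    ∃ σ : Equiv.Perm A,
      (∀ v : A, v ∉ X → σ v = v) ∧
      ∀ k : Fin n, (k : ℕ) < m →
        ((∃ j : Fin m, (j : ℕ) ≤ (k : ℕ) ∧ σ (y k) = (a j : A)) ∨ σ (y k) ∉ X) ∧
        (∀ d : Fin m, 1 ≤ (d : ℕ) → (d : ℕ) ≤ (k : ℕ) → σ (y k) = (a d : A) →
          ∃ i : Fin n, (i : ℕ) < (k : ℕ) ∧
            ∃ d' : Fin m, (d' : ℕ) + 1 = (d : ℕ) ∧ σ (y i) = (a d' : A)) := by
  classical
  -- T : first-occurrence indices of X-values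
  set T : Finset (Fin n) :=
    Finset.univ.filter (fun k => y k ∈ X ∧ ∀ i, i < k → y i ≠ y k) with hT
  have hmemT : ∀ k : Fin n, k ∈ T ↔ y k ∈ X ∧ ∀ i, i < k → y i ≠ y k := by
    intro k; simp [hT]
  have huniq : ∀ k ∈ T, ∀ k' ∈ T, y k = y k' → k = k' := by
    intro k hk k' hk' h
    rcases lt_trichotomy k k' with h1 | h1 | h1
    · exact absurd h (((hmemT k').1 hk').2 k h1)
    · exact h1
    · exact absurd h.symm (((hmemT k).1 hk).2 k' h1)
  have hcardX : Fintype.card X = m := by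
    rw [← Fintype.card_fin m]; exact Fintype.card_congr a.symm
  have hcard : T.card ≤ m := by
    have h1 : T.card ≤ X.toFinset.card := by
      apply Finset.card_le_card_of_injOn (fun k => y k)
      · intro k hk; simpa using ((hmemT k).1 hk).1
      · intro k hk k' hk' h
        exact huniq k (by simpa using hk) k' (by simpa using hk') h
    rwa [Set.toFinset_card, hcardX] at h1
  set e := T.orderIsoOfFin rfl with he
  have hesm : StrictMono (fun i : Fin T.card => ((e i : Fin n))) :=
    fun i j hij => e.lt_iff_lt.2 hij
  have hele : ∀ i : Fin T.card, (i : ℕ) ≤ ((e i : Fin n) : ℕ) :=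
    fun i => fin_le_strictMono hesm i
  clear_value T e
  -- the partial injection on X
  set p : X → Prop := fun w => ∃ k, k ∈ T ∧ y k = (w : A) with hp
  have hG : ∀ w : {w : X // p w}, ∃ k : Fin n, k ∈ T ∧ y k = (w.1 : A) := fun w => w.2
  set idx : {w : X // p w} → Fin n := fun w => (hG w).choose with hidxdef
  have hidx : ∀ w, idx w ∈ T ∧ y (idx w) = (w.1 : A) := fun w => (hG w).choose_spec
  set g : {w : X // p w} → X :=
    fun w => a ⟨(e.symm ⟨idx w, (hidx w).1⟩ : ℕ),
      lt_of_lt_of_le (Fin.is_lt _) hcard⟩ with hg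
  have hginj : Function.Injective g := by
    intro w w' h
    have h1 := a.injective h
    rw [Fin.mk.injEq] at h1
    have h3 : e.symm ⟨idx w, (hidx w).1⟩ = e.symm ⟨idx w', (hidx w').1⟩ := Fin.ext h1
    have h4 : (⟨idx w, (hidx w).1⟩ : T) = ⟨idx w', (hidx w').1⟩ := e.symm.injective h3
    have h5 : idx w = idx w' := congrArg Subtype.val h4
    have h6 : (w.1 : A) = (w'.1 : A) := by rw [← (hidx w).2, ← (hidx w').2, h5]
    exact Subtype.ext (Subtype.ext h6)
  set π : Equiv.Perm X := Equiv.extendSubtype (Equiv.ofInjective g hginj) with hπ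
  have hπmem : ∀ (w : X) (hw : p w), π w = g ⟨w, hw⟩ := by
    intro w hw
    rw [hπ, Equiv.extendSubtype_apply_of_mem _ w hw]
    simp [Equiv.ofInjective]
  set σ : Equiv.Perm A := Equiv.Perm.ofSubtype π with hσ
  have hσnot : ∀ v : A, v ∉ X → σ v = v := fun v hv =>
    Equiv.Perm.ofSubtype_apply_of_not_mem π hv
  have hσmem : ∀ (v : A) (hv : v ∈ X), σ v = ((π ⟨v, hv⟩ : X) : A) := fun v hv =>
    Equiv.Perm.ofSubtype_apply_of_mem π hv
  refine ⟨σ, hσnot, ?_⟩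
  intro k hkm
  by_cases hy : y k ∈ X
  · -- first occurrence index k₀
    have hex : ∃ j : ℕ, ∃ hj : j < n, y ⟨j, hj⟩ = y k := ⟨k, k.isLt, by simp⟩
    obtain ⟨k₀, hk₀T, hyj₀, hk₀le⟩ :
        ∃ k₀ : Fin n, k₀ ∈ T ∧ y k₀ = y k ∧ (k₀ : ℕ) ≤ (k : ℕ) := by
      obtain ⟨hj₀n, hyj₀⟩ := Nat.find_spec hex
      refine ⟨⟨Nat.find hex, hj₀n⟩, ?_, hyj₀, Nat.find_le ⟨k.isLt, by simp⟩⟩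
      rw [hmemT]
      refine ⟨by rwa [hyj₀], fun i hi hcon => ?_⟩
      have hlt : (i : ℕ) < Nat.find hex := hi
      exact Nat.find_min hex hlt ⟨i.isLt, by simpa [hyj₀] using hcon⟩
    have hpv : p ⟨y k, hy⟩ := ⟨k₀, hk₀T, hyj₀⟩
    have hidxv : idx ⟨⟨y k, hy⟩, hpv⟩ = k₀ :=
      huniq _ (hidx ⟨⟨y k, hy⟩, hpv⟩).1 _ hk₀T ((hidx ⟨⟨y k, hy⟩, hpv⟩).2.trans hyj₀.symm)
    obtain ⟨r, hrT, hrm, hre, hrk, hσk⟩ :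
        ∃ (r : ℕ) (hrT : r < T.card) (hrm : r < m),
          (e.symm ⟨k₀, hk₀T⟩ : ℕ) = r ∧ r ≤ (k : ℕ) ∧ σ (y k) = (a ⟨r, hrm⟩ : A) := by
      refine ⟨(e.symm ⟨k₀, hk₀T⟩ : ℕ), Fin.is_lt _, lt_of_lt_of_le (Fin.is_lt _) hcard,
        rfl, ?_, ?_⟩
      · have h1 := hele (e.symm ⟨k₀, hk₀T⟩)
        rw [OrderIso.apply_symm_apply] at h1
        exact le_trans h1 hk₀le
      · rw [hσmem (y k) hy, hπmem ⟨y k, hy⟩ hpv]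
        simp only [hg]
        congr 2
        simp [hidxv]
    have hback : 1 ≤ r → ∃ i : Fin n, (i : ℕ) < (k : ℕ) ∧
        ∃ d' : Fin m, (d' : ℕ) + 1 = r ∧ σ (y i) = (a d' : A) := by
      intro hr1
      obtain ⟨i, hiT, hik, hesymm⟩ :
          ∃ (i : Fin n) (hiT : i ∈ T), (i : ℕ) < (k₀ : ℕ) ∧
            (e.symm ⟨i, hiT⟩ : ℕ) = r - 1 := by
        have hlt : r - 1 < T.card := by omega
        refine ⟨((e ⟨r - 1, hlt⟩ : T) : Fin n), (e ⟨r - 1, hlt⟩).2, ?_, ?_⟩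
        · have h1 : (⟨r - 1, hlt⟩ : Fin T.card) < e.symm ⟨k₀, hk₀T⟩ := by
            rw [Fin.lt_def]
            show r - 1 < ((e.symm ⟨k₀, hk₀T⟩ : Fin T.card) : ℕ)
            omega
          have h2 := e.lt_iff_lt.2 h1
          rw [OrderIso.apply_symm_apply] at h2
          exact h2
        · have h3 : (⟨((e ⟨r - 1, hlt⟩ : T) : Fin n), (e ⟨r - 1, hlt⟩).2⟩ : T)
              = e ⟨r - 1, hlt⟩ := Subtype.coe_eta _ _
          rw [h3, OrderIso.symm_apply_apply]
      have hyiX : y i ∈ X := ((hmemT i).1 hiT).1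
      have hpw : p ⟨y i, hyiX⟩ := ⟨i, hiT, rfl⟩
      have hidxw : idx ⟨⟨y i, hyiX⟩, hpw⟩ = i :=
        huniq _ (hidx ⟨⟨y i, hyiX⟩, hpw⟩).1 _ hiT (hidx ⟨⟨y i, hyiX⟩, hpw⟩).2
      have hr1m : r - 1 < m := by omega
      have hσi : σ (y i) = (a ⟨r - 1, hr1m⟩ : A) := by
        rw [hσmem (y i) hyiX, hπmem ⟨y i, hyiX⟩ hpw]
        simp only [hg]
        congr 2
        simp only [hidxw]
        exact Fin.ext hesymm
      exact ⟨i, lt_of_lt_of_le hik hk₀le, ⟨r - 1, hr1m⟩, by show r - 1 + 1 = r; omega, hσi⟩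
    constructor
    · exact Or.inl ⟨⟨r, hrm⟩, hrk, hσk⟩
    · intro d hd1 hdk hσd
      have had : (⟨r, hrm⟩ : Fin m) = d :=
        a.injective (Subtype.coe_injective (hσk.symm.trans hσd))
      have hrd : r = (d : ℕ) := by rw [← had]
      obtain ⟨i, hik, d', hd', hσi⟩ := hback (by omega)
      exact ⟨i, hik, d', by omega, hσi⟩
  · have hfix : σ (y k) = y k := hσnot (y k) hy
    refine ⟨Or.inr (by rwa [hfix]), fun d _ _ hσd => ?_⟩
    rw [hfix] at hσd
    exact absurd (hσd ▸ (a d).2) hy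
end

section
/- Let B be a finite set, X a subset of B enumerated as b₁, …, b_n, and let y₁, …, y_m be elements of B, not necessarily distinct. There exists a permutation σ of B that fixes every element of B \ X such that for each i = 1, …, min{m, n}, σ(y_i) ∈ {b₁, …, b_i} ∪ (B \ X). -/
/-- Extended soundness core for strong ordered range constraints for DRD
functions: with `X ⊆ B` enumerated by `b : Fin n ≃ X` and an arbitrary
sequence `y : Fin m → B`, there is a permutation `σ` of `B` fixing `B \ X`
pointwise such that for each `i < min m n` (0-indexed),
`σ(y_i) ∈ {b₀, …, b_i} ∪ (B \ X)`. -/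
theorem drd_strong_ordered_range_extended {B : Type*} [Fintype B]
    {n m : ℕ} (X : Set B) (b : Fin n ≃ X) (y : Fin m → B) :
    ∃ σ : Equiv.Perm B,
      (∀ v : B, v ∉ X → σ v = v) ∧
      ∀ i : Fin m, (i : ℕ) < n →
        (∃ j : Fin n, (j : ℕ) ≤ (i : ℕ) ∧ σ (y i) = (b j : B)) ∨ σ (y i) ∉ X := by
  classical
  suffices h : ∀ t : ℕ, ∃ σ : Equiv.Perm B,
      (∀ v : B, v ∉ X → σ v = v) ∧
      ∀ i : Fin m, (i : ℕ) < n → (i : ℕ) < t →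
        (∃ j : Fin n, (j : ℕ) ≤ (i : ℕ) ∧ σ (y i) = (b j : B)) ∨ σ (y i) ∉ X by
    obtain ⟨σ, h1, h2⟩ := h m
    exact ⟨σ, h1, fun i hi => h2 i hi i.isLt⟩
  intro t
  induction t with
  | zero => exact ⟨1, fun v _ => rfl, fun i _ hi => absurd hi (Nat.not_lt_zero _)⟩
  | succ t ih =>
    obtain ⟨σ, hfix, hcond⟩ := ih
    by_cases htn : t < n
    · by_cases htm : t < m
      · set i₀ : Fin m := ⟨t, htm⟩ with hi₀
        by_cases hX : σ (y i₀) ∈ X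
        · set k : Fin n := b.symm ⟨σ (y i₀), hX⟩ with hk
          have hbk : (b k : B) = σ (y i₀) := by simp [hk]
          by_cases hkt : (k : ℕ) ≤ t
          · refine ⟨σ, hfix, fun i hin hit => ?_⟩
            rcases Nat.lt_succ_iff_lt_or_eq.mp hit with h | h
            · exact hcond i hin h
            · refine Or.inl ⟨k, by omega, ?_⟩
              have : i = i₀ := Fin.ext h
              rw [this, hbk]
          · push_neg at hkt
            -- bad set: images of earlier values under σ, as indices
            set g : Fin m → Fin n := fun i' =>
              if h' : σ (y i') ∈ X then b.symm ⟨σ (y i'), h'⟩ else k with hg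
            set bad : Finset (Fin n) :=
              (Finset.univ.filter (fun i' : Fin m => (i' : ℕ) < t)).image g with hbad
            set T : Finset (Fin n) := Finset.univ.filter (fun j : Fin n => (j : ℕ) ≤ t) with hT
            have hbadcard : bad.card ≤ t := by
              refine le_trans Finset.card_image_le ?_
              have : (Finset.univ.filter (fun i' : Fin m => (i' : ℕ) < t)).card
                  ≤ (Finset.range t).card := by
                refine Finset.card_le_card_of_injOn (fun i' : Fin m => (i' : ℕ)) ?_ ?_
                · intro i' hi'
                  simp only [Finset.mem_coe, Finset.mem_filter] at hi'
                  simpa using hi'.2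
                · intro a _ b _ hab
                  exact Fin.ext hab
              simpa using this
            have hTcard : t + 1 ≤ T.card := by
              have : (Finset.range (t + 1)).card ≤ T.card := by
                refine Finset.card_le_card_of_injOn
                  (fun j : ℕ => (⟨min j t, lt_of_le_of_lt (min_le_right _ _) htn⟩ : Fin n)) ?_ ?_
                · intro a _
                  exact Finset.mem_filter.mpr ⟨Finset.mem_univ _, min_le_right _ _⟩
                · intro a ha c hc hac
                  simp only [Finset.coe_range, Set.mem_Iio, Nat.lt_succ_iff] at ha hc
                  have := Fin.val_eq_of_eq hac
                  simpa [min_eq_left ha, min_eq_left hc] using this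
              simpa using this
            obtain ⟨j, hjT, hjbad⟩ : ∃ j ∈ T, j ∉ bad := by
              by_contra hcontra
              push_neg at hcontra
              have : T ⊆ bad := hcontra
              have := Finset.card_le_card this
              omega
            have hjt : (j : ℕ) ≤ t := by
              simpa [hT] using hjT
            have hfresh : ∀ i' : Fin m, (i' : ℕ) < t → σ (y i') ≠ (b j : B) := by
              intro i' hi' heq
              have h' : σ (y i') ∈ X := heq ▸ (b j).2
              apply hjbad
              rw [hbad]
              refine Finset.mem_image.mpr ⟨i', by simpa using hi', ?_⟩
              simp only [hg, dif_pos h']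
              have : (⟨σ (y i'), h'⟩ : X) = b j := Subtype.ext heq
              rw [this, Equiv.symm_apply_apply]
            have hjk : (b j : B) ≠ (b k : B) := by
              intro h
              have : j = k := b.injective (Subtype.ext h)
              omega
            set τ : Equiv.Perm B := Equiv.swap (b j : B) (b k : B) with hτ
            refine ⟨τ * σ, ?_, ?_⟩
            · intro v hv
              have h1 : v ≠ (b j : B) := fun h => hv (h ▸ (b j).2)
              have h2 : v ≠ (b k : B) := fun h => hv (h ▸ (b k).2)
              simp [hτ, hfix v hv, Equiv.swap_apply_of_ne_of_ne h1 h2]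
            · intro i hin hit
              rcases Nat.lt_succ_iff_lt_or_eq.mp hit with h | h
              · rcases hcond i hin h with ⟨j', hj', heq⟩ | hout
                · refine Or.inl ⟨j', hj', ?_⟩
                  have h1 : σ (y i) ≠ (b j : B) := hfresh i h
                  have h2 : σ (y i) ≠ (b k : B) := by
                    intro hh
                    have : j' = k := b.injective (Subtype.ext (heq.symm.trans hh))
                    omega
                  calc (τ * σ) (y i) = τ (σ (y i)) := rfl
                    _ = σ (y i) := Equiv.swap_apply_of_ne_of_ne h1 h2
                    _ = (b j' : B) := heq
                · refine Or.inr ?_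
                  have h1 : σ (y i) ≠ (b j : B) := fun hh => hout (hh ▸ (b j).2)
                  have h2 : σ (y i) ≠ (b k : B) := fun hh => hout (hh ▸ (b k).2)
                  have : (τ * σ) (y i) = σ (y i) := Equiv.swap_apply_of_ne_of_ne h1 h2
                  rw [this]
                  exact hout
              · refine Or.inl ⟨j, by omega, ?_⟩
                have : i = i₀ := Fin.ext h
                rw [this]
                simp [hτ, ← hbk, Equiv.swap_apply_right]
        · refine ⟨σ, hfix, fun i hin hit => ?_⟩
          rcases Nat.lt_succ_iff_lt_or_eq.mp hit with h | h
          · exact hcond i hin h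
          · have : i = i₀ := Fin.ext h
            exact Or.inr (this ▸ hX)
      · refine ⟨σ, hfix, fun i hin hit => hcond i hin ?_⟩
        omega
    · refine ⟨σ, hfix, fun i hin hit => hcond i hin ?_⟩
      omega
end

section
/- Let A be a finite set, X a subset of A enumerated as d₁, …, d_m, and let S be any subset of A. There exists a permutation σ of A that fixes every element of A \ X such that the pointwise image σ(S) equals (S \ X) ∪ {d₁, …, d_k}, where k = |S ∩ X|; in particular σ(S) ∩ X = {d₁, …, d_k}. -/
open scoped Classical

/-- Extended soundness core for predicate membership constraints: with `X ⊆ A`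
enumerated by `d : Fin m ≃ X` and any `S ⊆ A`, there is a permutation `σ` of
`A` fixing `A \ X` pointwise whose pointwise image of `S` is
`(S \ X) ∪ {d₀, …, d_{k-1}}` where `k = |S ∩ X|`; in particular
`σ(S) ∩ X = {d₀, …, d_{k-1}}`. -/
theorem predicate_membership_perm_extended {A : Type*} [Fintype A] {m : ℕ}
    (X : Set A) (d : Fin m ≃ X) (S : Set A) :
    ∃ σ : Equiv.Perm A,
      (∀ v : A, v ∉ X → σ v = v) ∧
      (σ : A → A) '' S =
        (S \ X) ∪ {v : A | ∃ j : Fin m, (j : ℕ) < (S ∩ X).ncard ∧ v = (d j : A)} ∧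
      ((σ : A → A) '' S) ∩ X =
        {v : A | ∃ j : Fin m, (j : ℕ) < (S ∩ X).ncard ∧ v = (d j : A)} := by
  classical
  set k := (S ∩ X).ncard with hk
  set p : Fin m → Prop := fun j => (d j : A) ∈ S with hp
  set q : Fin m → Prop := fun j => (j : ℕ) < k with hq
  -- card of p-subtype is k
  have e1 : {j : Fin m // p j} ≃ ↥(S ∩ X) :=
    { toFun := fun j => ⟨(d j.1 : A), j.2, (d j.1).2⟩
      invFun := fun x => ⟨d.symm ⟨x.1, x.2.2⟩, by
        simpa [hp, Equiv.apply_symm_apply] using x.2.1⟩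
      left_inv := fun j => by simp
      right_inv := fun x => by simp }
  have hcardp : Fintype.card {j : Fin m // p j} = k := by
    rw [Fintype.card_congr e1, hk, Set.ncard_eq_toFinset_card', Set.toFinset_card]
  have hkm : k ≤ m := by
    rw [← hcardp]
    simpa using Fintype.card_subtype_le p
  have e2 : {j : Fin m // q j} ≃ Fin k :=
    { toFun := fun j => ⟨(j.1 : ℕ), j.2⟩
      invFun := fun i => ⟨⟨(i : ℕ), lt_of_lt_of_le i.2 hkm⟩, i.2⟩
      left_inv := fun j => by ext; simp
      right_inv := fun i => by simp }
  have hcardq : Fintype.card {j : Fin m // q j} = k := by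
    rw [Fintype.card_congr e2, Fintype.card_fin]
  have ep : {j : Fin m // p j} ≃ {j : Fin m // q j} :=
    Fintype.equivOfCardEq (by rw [hcardp, hcardq])
  have en : {j : Fin m // ¬ p j} ≃ {j : Fin m // ¬ q j} :=
    Fintype.equivOfCardEq (by
      rw [Fintype.card_subtype_compl, Fintype.card_subtype_compl, hcardp, hcardq])
  set τ : Equiv.Perm (Fin m) := Equiv.subtypeCongr ep en with hτ
  have hτp : ∀ j : Fin m, p j → q (τ j) := by
    intro j hj
    have : τ j = (ep ⟨j, hj⟩ : Fin m) := by
      simp [hτ, Equiv.subtypeCongr, hj]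
    rw [this]; exact (ep ⟨j, hj⟩).2
  have hτq : ∀ i : Fin m, q i → ∃ j : Fin m, p j ∧ τ j = i := by
    intro i hi
    refine ⟨(ep.symm ⟨i, hi⟩ : Fin m), (ep.symm ⟨i, hi⟩).2, ?_⟩
    have : τ (ep.symm ⟨i, hi⟩ : Fin m) = (ep (ep.symm ⟨i, hi⟩) : Fin m) := by
      simp [hτ, Equiv.subtypeCongr, (ep.symm ⟨i, hi⟩).2]
    rw [this, Equiv.apply_symm_apply]
  set σ : Equiv.Perm A := τ.extendDomain d with hσ
  have hfix : ∀ v : A, v ∉ X → σ v = v := fun v hv =>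
    Equiv.Perm.extendDomain_apply_not_subtype τ d hv
  have hd : ∀ j : Fin m, σ (d j : A) = (d (τ j) : A) := fun j =>
    Equiv.Perm.extendDomain_apply_image τ d j
  set D : Set A := {v : A | ∃ j : Fin m, (j : ℕ) < k ∧ v = (d j : A)} with hD
  have himg : (σ : A → A) '' S = (S \ X) ∪ D := by
    ext v
    constructor
    · rintro ⟨u, hu, rfl⟩
      by_cases hx : u ∈ X
      · right
        set j := d.symm ⟨u, hx⟩ with hj
        have hdj : (d j : A) = u := by simp [hj]
        have hpj : p j := by rw [hp]; simpa [hdj] using hu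
        refine ⟨τ j, hτp j hpj, ?_⟩
        rw [← hdj, hd]
      · left
        rw [hfix u hx]
        exact ⟨hu, hx⟩
    · rintro (⟨hvS, hvX⟩ | ⟨i, hi, rfl⟩)
      · exact ⟨v, hvS, hfix v hvX⟩
      · obtain ⟨j, hpj, hji⟩ := hτq i hi
        exact ⟨(d j : A), hpj, by rw [hd, hji]⟩
  refine ⟨σ, hfix, himg, ?_⟩
  rw [himg]
  ext v
  simp only [Set.mem_inter_iff, Set.mem_union, Set.mem_diff, hD, Set.mem_setOf_eq]
  constructor
  · rintro ⟨(⟨_, hvX⟩ | h), hx⟩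
    · exact absurd hx hvX
    · exact h
  · rintro ⟨j, hj, rfl⟩
    exact ⟨Or.inr ⟨j, hj, rfl⟩, (d j).2⟩
end
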